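/- arXiv:2201.05874 — 2 statements merged into one kernel-verified Lean document; each statement's English description precedes it below -/
import Mathlib

section
/- Let ‖·‖ be a norm on ℝ^d with unit ball U and let (u^i_1)_{i=1}^m, ..., (u^i_n)_{i=1}^m be n sequences in U whose union is a zero-sum sequence. Then for each k ∈ {1,...,m} there exist subsets I_1,...,I_n ⊆ {1,...,m}, each of cardinality k, such that ‖∑_{j=1}^n ∑_{i ∈ I_j} u^i_j‖ ≤ d. -/
open Finset


noncomputable def Frac {m n : ℕ} (x : Fin m → Fin n → ℝ) : Finset (Fin m × Fin n) :=
  Finset.univ.filter (fun p => 0 < x p.1 p.2 ∧ x p.1 p.2 < 1)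

def SInv {d m n : ℕ} (u : Fin m → Fin n → Fin d → ℝ) (k : ℕ)
    (x : Fin m → Fin n → ℝ) : Prop :=
  (∀ i j, 0 ≤ x i j ∧ x i j ≤ 1) ∧ (∀ j, ∑ i, x i j = (k : ℝ)) ∧
    (∑ i, ∑ j, x i j • u i j = 0)


lemma kernel_exists {m n d : ℕ} (u : Fin m → Fin n → Fin d → ℝ)
    (F : Finset (Fin m × Fin n)) (hF : (F.image Prod.snd).card + d < F.card) :
    ∃ δ : Fin m → Fin n → ℝ, (∃ i j, δ i j ≠ 0) ∧
      (∀ i j, (i,j) ∉ F → δ i j = 0) ∧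
      (∀ j, ∑ i, δ i j = 0) ∧
      (∑ i, ∑ j, δ i j • u i j = 0) := by
  classical
  set C := F.image Prod.snd with hC
  let φ : (↥F → ℝ) →ₗ[ℝ] ((↥C → ℝ) × (Fin d → ℝ)) :=
    { toFun := fun y => (fun j => ∑ p : ↥F, (if p.val.2 = j.val then (1:ℝ) else 0) * y p,
                         ∑ p : ↥F, y p • u p.val.1 p.val.2)
      map_add' := by
        intro y z
        refine Prod.ext (funext fun j => ?_) ?_ <;> simp [mul_add, add_smul, Finset.sum_add_distrib]
      map_smul' := by
        intro c y
        refine Prod.ext (funext fun j => ?_) ?_ <;>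
          simp [Finset.mul_sum, Finset.smul_sum, smul_smul, smul_comm, mul_left_comm] }
  have hinj : ¬ Function.Injective φ := by
    intro h
    have := LinearMap.finrank_le_finrank_of_injective h
    rw [Module.finrank_fintype_fun_eq_card, Module.finrank_prod,
      Module.finrank_fintype_fun_eq_card, Module.finrank_fintype_fun_eq_card,
      Fintype.card_coe, Fintype.card_coe, Fintype.card_fin] at this
    omega
  rw [Function.not_injective_iff] at hinj
  obtain ⟨a, b, hab, hne⟩ := hinj
  have hy0 : φ (a - b) = 0 := by rw [map_sub, hab, sub_self]
  set y := a - b with hy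
  have hyne : y ≠ 0 := sub_ne_zero.mpr hne
  refine ⟨fun i j => if h : (i,j) ∈ F then y ⟨(i,j), h⟩ else 0, ?_, ?_, ?_, ?_⟩
  · obtain ⟨p, hp⟩ := Function.ne_iff.mp hyne
    exact ⟨p.val.1, p.val.2, by simpa [p.prop] using hp⟩
  · intro i j h; simp [h]
  · intro j
    by_cases hj : j ∈ C
    · have h1 : ∑ p : ↥F, (if p.val.2 = j then (1:ℝ) else 0) * y p = 0 :=
        congrFun (congrArg Prod.fst hy0) ⟨j, hj⟩
      have key : ∑ i : Fin m, (if h : (i,j) ∈ F then y ⟨(i,j),h⟩ else 0)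
          = ∑ p : ↥F, (if p.val.2 = j then (1:ℝ) else 0) * y p := by
        set g : Fin m × Fin n → ℝ :=
          fun p => if h : p ∈ F then (if p.2 = j then (1:ℝ) else 0) * y ⟨p,h⟩ else 0 with hg
        have e1 : ∑ p : ↥F, (if p.val.2 = j then (1:ℝ) else 0) * y p = ∑ p ∈ F, g p := by
          rw [← Finset.sum_attach F g]
          refine Finset.sum_congr rfl fun p _ => ?_
          simp [hg, p.prop]
        have e2 : ∑ p ∈ F, g p = ∑ p : Fin m × Fin n, g p := by
          refine Finset.sum_subset (Finset.subset_univ F) fun p _ hp => ?_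
          simp [hg, hp]
        have e3 : ∑ p : Fin m × Fin n, g p
            = ∑ i : Fin m, (if h : (i,j) ∈ F then y ⟨(i,j),h⟩ else 0) := by
          rw [Fintype.sum_prod_type]
          refine Finset.sum_congr rfl fun i _ => ?_
          rw [Finset.sum_eq_single j]
          · by_cases h : (i,j) ∈ F <;> simp [hg, h]
          · intro b _ hb
            by_cases h : (i,b) ∈ F <;> simp [hg, h, hb]
          · simp
        rw [e1, e2, e3]
      rw [key, h1]
    · refine Finset.sum_eq_zero fun i _ => ?_
      have : (i,j) ∉ F := fun h => hj (Finset.mem_image.mpr ⟨(i,j), h, rfl⟩)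
      simp [this]
  · have h2 : ∑ p : ↥F, y p • u p.val.1 p.val.2 = 0 := congrArg Prod.snd hy0
    set g : Fin m × Fin n → (Fin d → ℝ) :=
      fun p => if h : p ∈ F then y ⟨p,h⟩ • u p.1 p.2 else 0 with hg
    have e1 : ∑ p : ↥F, y p • u p.val.1 p.val.2 = ∑ p ∈ F, g p := by
      rw [← Finset.sum_attach F g]
      refine Finset.sum_congr rfl fun p _ => ?_
      simp [hg, p.prop]
    have e2 : ∑ p ∈ F, g p = ∑ p : Fin m × Fin n, g p := by
      refine Finset.sum_subset (Finset.subset_univ F) fun p _ hp => ?_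
      simp [hg, hp]
    have e3 : ∑ p : Fin m × Fin n, g p
        = ∑ i, ∑ jj, (if h : (i,jj) ∈ F then y ⟨(i,jj),h⟩ else 0) • u i jj := by
      rw [Fintype.sum_prod_type]
      refine Finset.sum_congr rfl fun i _ => Finset.sum_congr rfl fun jj _ => ?_
      by_cases h : (i,jj) ∈ F <;> simp [hg, h]
    rw [← e3, ← e2, ← e1, h2]

lemma exists_vertex {d m n : ℕ} (u : Fin m → Fin n → Fin d → ℝ) (k : ℕ)
    (x0 : Fin m → Fin n → ℝ) (h0 : SInv u k x0) :
    ∃ x, SInv u k x ∧ (Frac x).card ≤ ((Frac x).image Prod.snd).card + d := by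
  classical
  suffices main : ∀ c : ℕ, ∀ x, SInv u k x → (Frac x).card ≤ c →
      ∃ y, SInv u k y ∧ (Frac y).card ≤ ((Frac y).image Prod.snd).card + d by
    exact main (Frac x0).card x0 h0 le_rfl
  intro c
  induction c with
  | zero => intro x hx hc; exact ⟨x, hx, by omega⟩
  | succ c ih =>
    intro x hx hc
    by_cases hdone : (Frac x).card ≤ ((Frac x).image Prod.snd).card + d
    · exact ⟨x, hx, hdone⟩
    · push_neg at hdone
      obtain ⟨hbd, hcol, hvec⟩ := hx
      obtain ⟨δ, ⟨i0, j0, hδ0⟩, hsupp, hδcol, hδvec⟩ := kernel_exists u (Frac x) hdone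
      set F := Frac x with hFdef
      -- any point where δ ≠ 0 is in F
      have hmemF : ∀ i j, δ i j ≠ 0 → (i,j) ∈ F := by
        intro i j h; by_contra hn; exact h (hsupp i j hn)
      set P : Finset (Fin m × Fin n) := F.filter (fun p => δ p.1 p.2 ≠ 0) with hPdef
      have hPne : P.Nonempty := ⟨(i0,j0), by
        simp only [hPdef, Finset.mem_filter]; exact ⟨hmemF i0 j0 hδ0, hδ0⟩⟩
      set r : Fin m × Fin n → ℝ := fun p =>
        if 0 < δ p.1 p.2 then (1 - x p.1 p.2) / δ p.1 p.2
        else x p.1 p.2 / (-δ p.1 p.2) with hrdef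
      obtain ⟨p0, hp0P, hp0min⟩ := Finset.exists_min_image P r hPne
      set t := r p0 with htdef
      have hfrac : ∀ p ∈ P, 0 < x p.1 p.2 ∧ x p.1 p.2 < 1 := by
        intro p hp
        have : p ∈ F := Finset.mem_of_mem_filter p hp
        simpa [hFdef, Frac] using this
      have hrpos : ∀ p ∈ P, 0 < r p := by
        intro p hp
        obtain ⟨h1, h2⟩ := hfrac p hp
        have hδp : δ p.1 p.2 ≠ 0 := (Finset.mem_filter.mp hp).2
        by_cases hs : 0 < δ p.1 p.2
        · simp only [hrdef, if_pos hs]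
          exact div_pos (by linarith) hs
        · simp only [hrdef, if_neg hs]
          have : δ p.1 p.2 < 0 := lt_of_le_of_ne (not_lt.mp hs) hδp
          exact div_pos h1 (by linarith)
      have htpos : 0 < t := hrpos p0 hp0P
      set y : Fin m → Fin n → ℝ := fun i j => x i j + t * δ i j with hydef
      -- bounds
      have hybd : ∀ i j, 0 ≤ y i j ∧ y i j ≤ 1 := by
        intro i j
        by_cases hP : (i,j) ∈ P
        · have htle : t ≤ r (i,j) := hp0min (i,j) hP
          obtain ⟨h1, h2⟩ := hfrac (i,j) hP
          have hδp : δ i j ≠ 0 := by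
            have := (Finset.mem_filter.mp hP).2; exact this
          by_cases hs : 0 < δ i j
          · have : t * δ i j ≤ (1 - x i j) := by
              have := mul_le_mul_of_nonneg_right htle (le_of_lt hs)
              rw [hrdef] at this
              simp only [if_pos hs] at this
              rwa [div_mul_cancel₀ _ (ne_of_gt hs)] at this
            constructor
            · have : 0 ≤ t * δ i j := le_of_lt (mul_pos htpos hs)
              simp only [hydef]; linarith
            · simp only [hydef]; linarith
          · have hneg : δ i j < 0 := lt_of_le_of_ne (not_lt.mp hs) hδp
            have : t * (-δ i j) ≤ x i j := by
              have := mul_le_mul_of_nonneg_right htle (by linarith : (0:ℝ) ≤ -δ i j)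
              rw [hrdef] at this
              simp only [if_neg hs] at this
              rwa [div_mul_cancel₀ _ (by linarith : -δ i j ≠ 0)] at this
            constructor
            · simp only [hydef]; nlinarith
            · have : t * δ i j < 0 := mul_neg_of_pos_of_neg htpos hneg
              have := (hbd i j).2
              simp only [hydef]; linarith
        · have hδz : δ i j = 0 := by
            by_contra h
            exact hP (Finset.mem_filter.mpr ⟨hmemF i j h, h⟩)
          simp only [hydef, hδz, mul_zero, add_zero]
          exact hbd i j
      -- column sums
      have hycol : ∀ j, ∑ i, y i j = (k : ℝ) := by
        intro j
        simp only [hydef]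
        rw [Finset.sum_add_distrib, hcol j, ← Finset.mul_sum, hδcol j, mul_zero, add_zero]
      -- vector sum
      have hyvec : ∑ i, ∑ j, y i j • u i j = 0 := by
        have : ∀ i j, y i j • u i j = x i j • u i j + t • (δ i j • u i j) := by
          intro i j; simp only [hydef]; rw [add_smul, mul_smul]
        simp only [this, Finset.sum_add_distrib, ← Finset.smul_sum]
        rw [hvec, hδvec, smul_zero, add_zero]
      -- Frac y ⊂ F
      have hsub : Frac y ⊆ F := by
        intro p hp
        by_contra hn
        have hδz : δ p.1 p.2 = 0 := hsupp p.1 p.2 hn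
        have hyx : y p.1 p.2 = x p.1 p.2 := by simp [hydef, hδz]
        have : p ∈ Frac x := by
          have := Finset.mem_filter.mp hp
          refine Finset.mem_filter.mpr ⟨this.1, ?_⟩
          rw [← hyx]; exact this.2
        exact hn this
      have hp0out : p0 ∉ Frac y := by
        intro hp
        have hδp : δ p0.1 p0.2 ≠ 0 := (Finset.mem_filter.mp hp0P).2
        obtain ⟨h1, h2⟩ := hfrac p0 hp0P
        have hyval := (Finset.mem_filter.mp hp).2
        by_cases hs : 0 < δ p0.1 p0.2
        · have : y p0.1 p0.2 = 1 := by
            simp only [hydef, htdef, hrdef, if_pos hs]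
            field_simp
            ring
          rw [this] at hyval; exact lt_irrefl 1 hyval.2
        · have hneg : δ p0.1 p0.2 < 0 := lt_of_le_of_ne (not_lt.mp hs) hδp
          have e : t * δ p0.1 p0.2 = -x p0.1 p0.2 := by
            rw [htdef, hrdef]
            simp only [if_neg hs]
            rw [div_neg, neg_mul, div_mul_cancel₀ _ hδp]
          have : y p0.1 p0.2 = 0 := by
            have e2 : y p0.1 p0.2 = x p0.1 p0.2 + t * δ p0.1 p0.2 := rfl
            rw [e2, e]; ring
          rw [this] at hyval; exact lt_irrefl 0 hyval.1
      have hssub : Frac y ⊂ F := by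
        refine Finset.ssubset_iff_of_subset hsub |>.mpr ⟨p0, Finset.mem_of_mem_filter p0 hp0P, hp0out⟩
      have hcard : (Frac y).card < F.card := Finset.card_lt_card hssub
      exact ih y ⟨hybd, hycol, hyvec⟩ (by omega)

lemma small_subset_sum {α : Type*} [DecidableEq α] :
    ∀ (S : Finset α) (x : α → ℝ), (∀ a ∈ S, 0 ≤ x a) → ∀ t : ℕ, t ≤ S.card →
    ∃ D, D ⊆ S ∧ D.card = t ∧ (S.card : ℝ) * ∑ a ∈ D, x a ≤ (t : ℝ) * ∑ a ∈ S, x a := by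
  intro S
  induction S using Finset.strongInduction with
  | _ S ih =>
    intro x hx t ht
    rcases eq_or_lt_of_le ht with heq | hlt
    · exact ⟨S, Finset.Subset.refl S, heq.symm, by rw [heq]⟩
    · have hSne : S.Nonempty := Finset.card_pos.mp ((Nat.zero_lt_of_lt hlt))
      obtain ⟨a, haS, hamax⟩ := Finset.exists_max_image S x hSne
      have hsub : S.erase a ⊂ S := Finset.erase_ssubset haS
      have hcard : (S.erase a).card = S.card - 1 := Finset.card_erase_of_mem haS
      obtain ⟨D, hDsub, hDcard, hDsum⟩ := ih (S.erase a) hsub x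
        (fun b hb => hx b (Finset.mem_of_mem_erase hb)) t
        (by rw [hcard]; omega)
      refine ⟨D, hDsub.trans (Finset.erase_subset a S), hDcard, ?_⟩
      have hDa : ∑ b ∈ D, x b ≤ (t : ℝ) * x a := by
        calc ∑ b ∈ D, x b ≤ ∑ _b ∈ D, x a :=
              Finset.sum_le_sum fun b hb =>
                hamax b (Finset.mem_of_mem_erase (hDsub hb))
          _ = (t : ℝ) * x a := by rw [Finset.sum_const, hDcard, nsmul_eq_mul]
      have hcpos : 1 ≤ S.card := hSne.card_pos
      have hsplit : ∑ b ∈ S, x b = x a + ∑ b ∈ S.erase a, x b :=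
        (Finset.add_sum_erase S x haS).symm
      have hc1 : ((S.erase a).card : ℝ) = (S.card : ℝ) - 1 := by
        rw [hcard]; push_cast [Nat.cast_sub hcpos]; ring
      rw [hc1] at hDsum
      have : (S.card : ℝ) * ∑ b ∈ D, x b
          = ((S.card : ℝ) - 1) * ∑ b ∈ D, x b + ∑ b ∈ D, x b := by ring
      rw [this, hsplit]
      calc ((S.card : ℝ) - 1) * ∑ b ∈ D, x b + ∑ b ∈ D, x b
          ≤ (t : ℝ) * ∑ b ∈ S.erase a, x b + (t : ℝ) * x a := add_le_add hDsum hDa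
        _ = (t : ℝ) * (x a + ∑ b ∈ S.erase a, x b) := by ring

lemma column_split {m : ℕ} (k : ℕ) (w : Fin m → ℝ)
    (hbd : ∀ i, 0 ≤ w i ∧ w i ≤ 1) (hsum : ∑ i, w i = (k : ℝ)) :
    ((Finset.univ.filter (fun i => w i = 1)).card : ℝ)
      + ∑ i ∈ Finset.univ.filter (fun i => 0 < w i ∧ w i < 1), w i = (k : ℝ) := by
  classical
  set O := Finset.univ.filter (fun i => w i = (1:ℝ)) with hO
  set S := Finset.univ.filter (fun i => 0 < w i ∧ w i < 1) with hS
  have hdisj : Disjoint O S := by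
    rw [Finset.disjoint_left]
    intro i hiO hiS
    have h1 : w i = 1 := (Finset.mem_filter.mp hiO).2
    have h2 := (Finset.mem_filter.mp hiS).2
    linarith [h2.2]
  have hout : ∀ i, i ∉ O ∪ S → w i = 0 := by
    intro i hi
    rw [Finset.mem_union] at hi
    push_neg at hi
    have h1 : w i ≠ 1 := fun h => hi.1 (Finset.mem_filter.mpr ⟨Finset.mem_univ i, h⟩)
    have h2 : ¬(0 < w i ∧ w i < 1) := fun h => hi.2 (Finset.mem_filter.mpr ⟨Finset.mem_univ i, h⟩)
    obtain ⟨hl, hr⟩ := hbd i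
    rcases eq_or_lt_of_le hl with h | h
    · exact h.symm
    · exfalso; exact h2 ⟨h, lt_of_le_of_ne hr h1⟩
  have e1 : ∑ i, w i = ∑ i ∈ O ∪ S, w i := by
    refine (Finset.sum_subset (Finset.subset_univ _) fun i _ hi => hout i hi).symm
  have e2 : ∑ i ∈ O ∪ S, w i = ∑ i ∈ O, w i + ∑ i ∈ S, w i := Finset.sum_union hdisj
  have e3 : ∑ i ∈ O, w i = (O.card : ℝ) := by
    rw [Finset.sum_congr rfl (fun i hi => (Finset.mem_filter.mp hi).2), Finset.sum_const,
      nsmul_eq_mul, mul_one]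
  rw [← e3, ← e2, ← e1, hsum]

lemma column_two {m : ℕ} (k : ℕ) (w : Fin m → ℝ)
    (hbd : ∀ i, 0 ≤ w i ∧ w i ≤ 1) (hsum : ∑ i, w i = (k : ℝ))
    (hne : (Finset.univ.filter (fun i => 0 < w i ∧ w i < 1)).Nonempty) :
    2 ≤ (Finset.univ.filter (fun i => 0 < w i ∧ w i < 1)).card := by
  classical
  have hsplit := column_split k w hbd hsum
  set O := Finset.univ.filter (fun i => w i = (1:ℝ)) with hO
  set S := Finset.univ.filter (fun i => 0 < w i ∧ w i < 1) with hS
  have hok : (O.card : ℝ) ≤ (k : ℝ) := by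
    have : 0 ≤ ∑ i ∈ S, w i :=
      Finset.sum_nonneg fun i hi => le_of_lt (Finset.mem_filter.mp hi).2.1
    linarith
  have hokn : O.card ≤ k := Nat.cast_le.mp hok
  set s := k - O.card with hsdef
  have hsR : (s : ℝ) = ∑ i ∈ S, w i := by
    have : ((k - O.card : ℕ) : ℝ) = (k : ℝ) - (O.card : ℝ) := by
      push_cast [Nat.cast_sub hokn]; ring
    rw [hsdef, this]; linarith
  have hpos : 0 < ∑ i ∈ S, w i :=
    Finset.sum_pos (fun i hi => (Finset.mem_filter.mp hi).2.1) hne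
  have hs1 : 1 ≤ s := by
    by_contra h
    push_neg at h
    interval_cases s
    · rw [← hsR] at hpos; simp at hpos
  have hlt : ∑ i ∈ S, w i < (S.card : ℝ) := by
    calc ∑ i ∈ S, w i < ∑ _i ∈ S, (1:ℝ) :=
          Finset.sum_lt_sum_of_nonempty hne fun i hi => (Finset.mem_filter.mp hi).2.2
      _ = (S.card : ℝ) := by rw [Finset.sum_const, nsmul_eq_mul, mul_one]
  have : (s : ℝ) < (S.card : ℝ) := by rw [hsR]; exact hlt
  have hsS : s < S.card := Nat.cast_lt.mp this
  omega

lemma column_round {m : ℕ} (k : ℕ) (w : Fin m → ℝ)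
    (hbd : ∀ i, 0 ≤ w i ∧ w i ≤ 1) (hsum : ∑ i, w i = (k : ℝ)) :
    ∃ Ij : Finset (Fin m), Ij.card = k ∧
      ∑ i, |(if i ∈ Ij then (1:ℝ) else 0) - w i| ≤
        ((Finset.univ.filter (fun i => 0 < w i ∧ w i < 1)).card : ℝ) / 2 := by
  classical
  have hsplit := column_split k w hbd hsum
  set O := Finset.univ.filter (fun i => w i = (1:ℝ)) with hO
  set S := Finset.univ.filter (fun i => 0 < w i ∧ w i < 1) with hS
  have hSnn : ∀ i ∈ S, 0 ≤ w i := fun i hi => le_of_lt (Finset.mem_filter.mp hi).2.1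
  have hok : (O.card : ℝ) ≤ (k : ℝ) := by
    have : 0 ≤ ∑ i ∈ S, w i := Finset.sum_nonneg hSnn
    linarith
  have hokn : O.card ≤ k := Nat.cast_le.mp hok
  set s := k - O.card with hsdef
  have hsR : (s : ℝ) = ∑ i ∈ S, w i := by
    have : ((k - O.card : ℕ) : ℝ) = (k : ℝ) - (O.card : ℝ) := by
      push_cast [Nat.cast_sub hokn]; ring
    rw [hsdef, this]; linarith
  have hsle : s ≤ S.card := by
    have h1 : ∑ i ∈ S, w i ≤ (S.card : ℝ) := by
      calc ∑ i ∈ S, w i ≤ ∑ _i ∈ S, (1:ℝ) :=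
            Finset.sum_le_sum fun i hi => le_of_lt (Finset.mem_filter.mp hi).2.2
        _ = (S.card : ℝ) := by rw [Finset.sum_const, nsmul_eq_mul, mul_one]
    exact_mod_cast hsR ▸ h1
  obtain ⟨D, hDS, hDcard, hDsum⟩ := small_subset_sum S w hSnn (S.card - s) (Nat.sub_le _ _)
  set U := S \ D with hU
  have hUcard : U.card = s := by
    rw [hU, Finset.card_sdiff_of_subset hDS, hDcard]; omega
  have hdisjOU : Disjoint O U := by
    rw [Finset.disjoint_left]
    intro i hiO hiU
    have h1 : w i = 1 := (Finset.mem_filter.mp hiO).2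
    have h2 := (Finset.mem_filter.mp (Finset.mem_sdiff.mp hiU).1).2
    linarith [h2.2]
  refine ⟨O ∪ U, ?_, ?_⟩
  · rw [Finset.card_union_of_disjoint hdisjOU, hUcard]; omega
  · -- compute the abs sum
    have hmem : ∀ i, (i ∈ O ∪ U) = (i ∈ O ∪ U) := fun _ => rfl
    have hout : ∀ i, i ∉ O ∪ S → w i = 0 := by
      intro i hi
      rw [Finset.mem_union] at hi
      push_neg at hi
      have h1 : w i ≠ 1 := fun h => hi.1 (Finset.mem_filter.mpr ⟨Finset.mem_univ i, h⟩)
      have h2 : ¬(0 < w i ∧ w i < 1) := fun h => hi.2 (Finset.mem_filter.mpr ⟨Finset.mem_univ i, h⟩)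
      obtain ⟨hl, hr⟩ := hbd i
      rcases eq_or_lt_of_le hl with h | h
      · exact h.symm
      · exfalso; exact h2 ⟨h, lt_of_le_of_ne hr h1⟩
    have hdisjOS : Disjoint O S := by
      rw [Finset.disjoint_left]
      intro i hiO hiS
      have h1 : w i = 1 := (Finset.mem_filter.mp hiO).2
      have h2 := (Finset.mem_filter.mp hiS).2
      linarith [h2.2]
    set g : Fin m → ℝ := fun i => |(if i ∈ O ∪ U then (1:ℝ) else 0) - w i| with hg
    have e0 : ∑ i, g i = ∑ i ∈ O ∪ S, g i := by
      refine (Finset.sum_subset (Finset.subset_univ _) fun i _ hi => ?_).symm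
      have hw0 : w i = 0 := hout i hi
      have hiOU : i ∉ O ∪ U := by
        intro h
        rcases Finset.mem_union.mp h with h' | h'
        · exact hi (Finset.mem_union.mpr (Or.inl h'))
        · exact hi (Finset.mem_union.mpr (Or.inr (Finset.mem_sdiff.mp h').1))
      simp only [hg, if_neg hiOU, hw0, sub_zero, abs_zero]
    have e1 : ∑ i ∈ O ∪ S, g i = ∑ i ∈ O, g i + ∑ i ∈ S, g i := Finset.sum_union hdisjOS
    have e2 : ∑ i ∈ O, g i = 0 := by
      refine Finset.sum_eq_zero fun i hi => ?_
      have h1 : w i = 1 := (Finset.mem_filter.mp hi).2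
      have : i ∈ O ∪ U := Finset.mem_union.mpr (Or.inl hi)
      simp only [hg, if_pos this, h1, sub_self, abs_zero]
    have e3 : ∑ i ∈ S, g i = ∑ i ∈ U, g i + ∑ i ∈ D, g i := (Finset.sum_sdiff hDS).symm
    have e4 : ∑ i ∈ U, g i = (s : ℝ) - ∑ i ∈ U, w i := by
      have : ∀ i ∈ U, g i = 1 - w i := by
        intro i hi
        have hiOU : i ∈ O ∪ U := Finset.mem_union.mpr (Or.inr hi)
        have hw : w i < 1 := (Finset.mem_filter.mp (Finset.mem_sdiff.mp hi).1).2.2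
        simp only [hg, if_pos hiOU]
        rw [abs_of_nonneg (by linarith)]
      rw [Finset.sum_congr rfl this, Finset.sum_sub_distrib, Finset.sum_const,
        nsmul_eq_mul, mul_one, hUcard]
    have e5 : ∑ i ∈ D, g i = ∑ i ∈ D, w i := by
      refine Finset.sum_congr rfl fun i hi => ?_
      have hiS : i ∈ S := hDS hi
      have hiU : i ∉ U := by simp [hU, hi]
      have hiO : i ∉ O := by
        intro h
        exact (Finset.disjoint_left.mp hdisjOS) h hiS
      have hiOU : i ∉ O ∪ U := by simp [hiO, hiU]
      have hw : 0 < w i := (Finset.mem_filter.mp hiS).2.1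
      simp only [hg, if_neg hiOU]
      rw [abs_of_nonpos (by linarith)]; ring
    have hUW : ∑ i ∈ U, w i = ∑ i ∈ S, w i - ∑ i ∈ D, w i := by
      rw [hU, Finset.sum_sdiff_eq_sub hDS]
    have etotal : ∑ i, g i = 2 * ∑ i ∈ D, w i := by
      rw [e0, e1, e2, e3, e4, e5, hUW, hsR]; ring
    rw [etotal]
    -- bound 2 * ∑_D w ≤ S.card / 2
    by_cases hf : S.card = 0
    · have : D = ∅ := Finset.subset_empty.mp (by rw [← Finset.card_eq_zero.mp hf]; exact hDS)
      rw [this]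
      simp [hf]
    · have hfpos : (0:ℝ) < (S.card : ℝ) := by exact_mod_cast Nat.pos_of_ne_zero hf
      have hcast : ((S.card - s : ℕ) : ℝ) = (S.card : ℝ) - (s : ℝ) := by
        push_cast [Nat.cast_sub hsle]; ring
      rw [hcast, ← hsR] at hDsum
      have hDnn : 0 ≤ ∑ a ∈ D, w a := Finset.sum_nonneg fun a ha => hSnn a (hDS ha)
      have hsq : ((S.card : ℝ) - (s:ℝ)) * (s:ℝ) ≤ (S.card : ℝ)^2 / 4 := by nlinarith [sq_nonneg ((S.card : ℝ) - 2*(s:ℝ))]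
      nlinarith [hDsum, hsq, hfpos, hDnn]


lemma N_sum_le {d : ℕ} {α : Type*} (N : (Fin d → ℝ) → ℝ)
    (hN_add : ∀ x y, N (x + y) ≤ N x + N y) (hN0 : N 0 = 0)
    (s : Finset α) (f : α → Fin d → ℝ) : N (∑ a ∈ s, f a) ≤ ∑ a ∈ s, N (f a) := by
  classical
  induction s using Finset.induction_on with
  | empty => simp [hN0]
  | insert _ _ h ih =>
    rw [Finset.sum_insert h, Finset.sum_insert h]
    exact le_trans (hN_add _ _) (by linarith)

theorem stmt6 (d m n : ℕ) (N : (Fin d → ℝ) → ℝ)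
    (hN_add : ∀ x y, N (x + y) ≤ N x + N y)
    (hN_smul : ∀ (c : ℝ) x, N (c • x) = |c| * N x)
    (u : Fin m → Fin n → Fin d → ℝ)
    (hu_norm : ∀ i j, N (u i j) ≤ 1)
    (hzero : ∑ i, ∑ j, u i j = 0) :
    ∀ k : ℕ, 1 ≤ k → k ≤ m →
      ∃ I : Fin n → Finset (Fin m),
        (∀ j, (I j).card = k) ∧
        N (∑ j, ∑ i ∈ I j, u i j) ≤ (d : ℝ) := by
  classical
  intro k hk1 hkm
  have hm : 0 < m := lt_of_lt_of_le hk1 hkm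
  have hmR : (0:ℝ) < m := by exact_mod_cast hm
  have hN0 : N 0 = 0 := by
    have := hN_smul 0 0
    simpa using this
  -- initial feasible point
  have h0 : SInv u k (fun _ _ => (k:ℝ)/m) := by
    refine ⟨fun i j => ⟨by positivity, ?_⟩, fun j => ?_, ?_⟩
    · rw [div_le_one hmR]; exact_mod_cast hkm
    · simp only []
      rw [Finset.sum_const, Finset.card_univ, Fintype.card_fin, nsmul_eq_mul]
      field_simp
    · simp only []
      calc ∑ i, ∑ j, ((k:ℝ)/m) • u i j = ((k:ℝ)/m) • ∑ i, ∑ j, u i j := by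
            rw [Finset.smul_sum]
            exact Finset.sum_congr rfl fun i _ => by rw [Finset.smul_sum]
        _ = 0 := by rw [hzero, smul_zero]
  obtain ⟨x, ⟨hbd, hcol, hvec⟩, hvert⟩ := exists_vertex u k _ h0
  set F := Frac x with hF
  set C := F.image Prod.snd with hC
  set Fj : Fin n → Finset (Fin m) :=
    fun j => Finset.univ.filter (fun i => 0 < x i j ∧ x i j < 1) with hFj
  -- fiber count
  have hcount : F.card = ∑ j, (Fj j).card := by
    rw [hF, Frac, Finset.card_eq_sum_card_fiberwise
      (f := Prod.snd) (t := Finset.univ) (fun p _ => Finset.mem_univ p.2)]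
    refine Finset.sum_congr rfl fun j _ => ?_
    refine Finset.card_bij (fun p _ => p.1) ?_ ?_ ?_
    · intro p hp
      obtain ⟨hp1, hp2⟩ := Finset.mem_filter.mp hp
      obtain ⟨-, hfr⟩ := Finset.mem_filter.mp hp1
      subst hp2
      exact Finset.mem_filter.mpr ⟨Finset.mem_univ _, hfr⟩
    · intro p hp q hq hpq
      obtain ⟨_, hp2⟩ := Finset.mem_filter.mp hp
      obtain ⟨_, hq2⟩ := Finset.mem_filter.mp hq
      exact Prod.ext hpq (hp2.trans hq2.symm)
    · intro i hi
      obtain ⟨_, hfr⟩ := Finset.mem_filter.mp hi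
      exact ⟨(i, j), Finset.mem_filter.mpr
        ⟨Finset.mem_filter.mpr ⟨Finset.mem_univ _, hfr⟩, rfl⟩, rfl⟩
  have hmemC : ∀ j, j ∈ C ↔ (Fj j).Nonempty := by
    intro j
    constructor
    · intro hj
      obtain ⟨p, hp, hpj⟩ := Finset.mem_image.mp hj
      obtain ⟨_, hfr⟩ := Finset.mem_filter.mp hp
      exact ⟨p.1, Finset.mem_filter.mpr ⟨Finset.mem_univ _, by rw [← hpj]; exact hfr⟩⟩
    · intro ⟨i, hi⟩
      obtain ⟨_, hfr⟩ := Finset.mem_filter.mp hi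
      exact Finset.mem_image.mpr ⟨(i, j),
        Finset.mem_filter.mpr ⟨Finset.mem_univ _, hfr⟩, rfl⟩
  have hFj_empty : ∀ j, j ∉ C → Fj j = ∅ := by
    intro j hj
    rw [← Finset.not_nonempty_iff_eq_empty]
    exact fun h => hj ((hmemC j).mpr h)
  have h2 : ∀ j ∈ C, 2 ≤ (Fj j).card := by
    intro j hj
    exact column_two k (fun i => x i j) (fun i => hbd i j) (hcol j) ((hmemC j).mp hj)
  have hsum_univ : ∑ j, (Fj j).card = ∑ j ∈ C, (Fj j).card := by
    refine (Finset.sum_subset (Finset.subset_univ C) fun j _ hj => ?_).symm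
    rw [hFj_empty j hj, Finset.card_empty]
  have h2C : 2 * C.card ≤ ∑ j ∈ C, (Fj j).card := by
    calc 2 * C.card = C.card * 2 := by ring
      _ ≤ ∑ j ∈ C, (Fj j).card := Finset.card_nsmul_le_sum C _ 2 h2
  have hCd : C.card ≤ d := by omega
  have hF2d : F.card ≤ 2 * d := by omega
  -- rounding per column
  have hround := fun j => column_round k (fun i => x i j) (fun i => hbd i j) (hcol j)
  choose I hIcard hIbd using hround
  refine ⟨I, hIcard, ?_⟩
  set c : Fin m → Fin n → ℝ := fun i j => (if i ∈ I j then (1:ℝ) else 0) - x i j with hc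
  have hswap : ∑ j, ∑ i, x i j • u i j = 0 := by
    rw [Finset.sum_comm]; exact hvec
  have hkey : ∑ j, ∑ i ∈ I j, u i j = ∑ j, ∑ i, c i j • u i j := by
    rw [eq_comm]
    calc ∑ j, ∑ i, c i j • u i j
        = ∑ j, (∑ i, (if i ∈ I j then (1:ℝ) else 0) • u i j - ∑ i, x i j • u i j) := by
          refine Finset.sum_congr rfl fun j _ => ?_
          rw [← Finset.sum_sub_distrib]
          exact Finset.sum_congr rfl fun i _ => sub_smul _ _ _
      _ = ∑ j, ∑ i, (if i ∈ I j then (1:ℝ) else 0) • u i j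
            - ∑ j, ∑ i, x i j • u i j := Finset.sum_sub_distrib _ _
      _ = ∑ j, ∑ i ∈ I j, u i j := by
          rw [hswap, sub_zero]
          refine Finset.sum_congr rfl fun j _ => ?_
          simp only [ite_smul, one_smul, zero_smul]
          rw [Finset.sum_ite_mem, Finset.univ_inter]
  rw [hkey]
  calc N (∑ j, ∑ i, c i j • u i j)
      ≤ ∑ j, N (∑ i, c i j • u i j) := N_sum_le N hN_add hN0 _ _
    _ ≤ ∑ j, ∑ i, N (c i j • u i j) :=
        Finset.sum_le_sum fun j _ => N_sum_le N hN_add hN0 _ _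
    _ = ∑ j, ∑ i, |c i j| * N (u i j) := by
        refine Finset.sum_congr rfl fun j _ => Finset.sum_congr rfl fun i _ => ?_
        exact hN_smul _ _
    _ ≤ ∑ j, ∑ i, |c i j| := by
        refine Finset.sum_le_sum fun j _ => Finset.sum_le_sum fun i _ => ?_
        have h1 := hu_norm i j
        have h2 := abs_nonneg (c i j)
        nlinarith
    _ ≤ ∑ j, ((Fj j).card : ℝ) / 2 := Finset.sum_le_sum fun j _ => hIbd j
    _ = (F.card : ℝ) / 2 := by
        rw [hcount]
        push_cast
        rw [Finset.sum_div]
    _ ≤ (d : ℝ) := by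
        have : (F.card : ℝ) ≤ 2 * d := by exact_mod_cast hF2d
        linarith
end

section
/- Let (u^i)_{i=1}^m be a zero-sum sequence in ℝ^d with ‖u^i‖ ≤ M for all i, for some norm ‖·‖. Then there exists a permutation π of {1,...,m} such that ‖∑_{i=1}^k u^{π(i)}‖ ≤ M·d for each k ∈ {1,...,m}. -/
open Finset

section SteinitzAux

variable {d m : ℕ} {M : ℝ} {N : (Fin d → ℝ) → ℝ}

lemma auxN0 (hN_smul : ∀ (c : ℝ) x, N (c • x) = |c| * N x) : N 0 = 0 := by
  have h := hN_smul 0 0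
  simpa using h

lemma auxN_nonneg (hN_add : ∀ x y, N (x + y) ≤ N x + N y)
    (hN_smul : ∀ (c : ℝ) x, N (c • x) = |c| * N x) (x : Fin d → ℝ) : 0 ≤ N x := by
  have h1 : N (x + (-1 : ℝ) • x) ≤ N x + N ((-1 : ℝ) • x) := hN_add _ _
  have h2 : N ((-1 : ℝ) • x) = N x := by rw [hN_smul]; simp
  have h3 : x + (-1 : ℝ) • x = 0 := by simp
  rw [h3, h2, auxN0 hN_smul] at h1
  linarith

lemma auxN_sum_le (hN_add : ∀ x y, N (x + y) ≤ N x + N y)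
    (hN_smul : ∀ (c : ℝ) x, N (c • x) = |c| * N x) {ι : Type*} [DecidableEq ι]
    (s : Finset ι) (f : ι → Fin d → ℝ) :
    N (∑ i ∈ s, f i) ≤ ∑ i ∈ s, N (f i) := by
  induction s using Finset.induction with
  | empty => simp [auxN0 hN_smul]
  | insert _ _ h ih =>
    rw [Finset.sum_insert h, Finset.sum_insert h]
    exact le_trans (hN_add _ _) (by linarith)

/-- Rounding lemma: a point of the transportation-style polytope can be replaced
by one with at most `d+1` fractional coordinates, preserving the two linear sums. -/
lemma reduceFrac (u : Fin m → Fin d → ℝ) :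
    ∀ (n : ℕ) (A : Finset (Fin m)) (l : Fin m → ℝ),
      (A.filter (fun i => l i ≠ 0 ∧ l i ≠ 1)).card ≤ n →
      (∀ i ∈ A, 0 ≤ l i ∧ l i ≤ 1) →
      ∃ l' : Fin m → ℝ, (∀ i ∈ A, 0 ≤ l' i ∧ l' i ≤ 1) ∧
        (∑ i ∈ A, l' i) = (∑ i ∈ A, l i) ∧
        (∑ i ∈ A, l' i • u i) = (∑ i ∈ A, l i • u i) ∧
        (A.filter (fun i => l' i ≠ 0 ∧ l' i ≠ 1)).card ≤ d + 1 := by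
  intro n
  induction n with
  | zero =>
    intro A l hc hb
    exact ⟨l, hb, rfl, rfl, le_trans hc (by omega)⟩
  | succ n ih =>
    intro A l hc hb
    by_cases hle : (A.filter (fun i => l i ≠ 0 ∧ l i ≠ 1)).card ≤ d + 1
    · exact ⟨l, hb, rfl, rfl, hle⟩
    push_neg at hle
    set F := A.filter (fun i => l i ≠ 0 ∧ l i ≠ 1) with hFdef
    have hFA : F ⊆ A := Finset.filter_subset _ _
    -- linear dependence of the vectors (1, u i), i ∈ F
    have hnli : ¬ LinearIndependent ℝ
        (fun i : {x // x ∈ F} => (((1 : ℝ), u i.1) : ℝ × (Fin d → ℝ))) := by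
      intro h
      have h2 := h.fintype_card_le_finrank
      rw [Module.finrank_prod, Module.finrank_self, Module.finrank_pi] at h2
      simp only [Fintype.card_coe, Fintype.card_fin] at h2
      omega
    obtain ⟨g, hgsum, i0, hgi0⟩ := Fintype.not_linearIndependent_iff.mp hnli
    classical
    set μ : Fin m → ℝ := fun j => if h : j ∈ F then g ⟨j, h⟩ else 0 with hμdef
    have hμF : ∀ j, j ∉ F → μ j = 0 := fun j hj => dif_neg hj
    have hμg : ∀ x : {x // x ∈ F}, μ x.1 = g x := by
      intro x; rw [hμdef]; simp only [x.2, dif_pos]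
    have h1 : ∑ i : {x // x ∈ F}, g i = 0 := by
      have := congrArg Prod.fst hgsum
      rw [Prod.fst_sum] at this
      simpa using this
    have h2 : ∑ i : {x // x ∈ F}, g i • u i.1 = 0 := by
      have := congrArg Prod.snd hgsum
      rw [Prod.snd_sum] at this
      simpa using this
    have hμsumF : ∑ j ∈ F, μ j = 0 := by
      rw [← Finset.sum_attach F μ]
      rw [← Finset.univ_eq_attach]
      rw [Finset.sum_congr rfl (fun x _ => hμg x)]
      exact h1
    have hμusumF : ∑ j ∈ F, μ j • u j = 0 := by
      rw [← Finset.sum_attach F (fun j => μ j • u j)]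
      rw [← Finset.univ_eq_attach]
      rw [Finset.sum_congr rfl (fun x _ => by rw [hμg x])]
      exact h2
    have hμsum : ∑ j ∈ A, μ j = 0 := by
      rw [← Finset.sum_subset hFA (fun j _ hj => hμF j hj)]
      exact hμsumF
    have hμusum : ∑ j ∈ A, μ j • u j = 0 := by
      rw [← Finset.sum_subset hFA (fun j _ hj => by rw [hμF j hj, zero_smul])]
      exact hμusumF
    set T := F.filter (fun j => μ j ≠ 0) with hTdef
    have hi0T : (i0 : Fin m) ∈ T :=
      Finset.mem_filter.mpr ⟨i0.2, by rw [hμg i0]; exact hgi0⟩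
    have hTne : T.Nonempty := ⟨i0, hi0T⟩
    set r : Fin m → ℝ := fun j => if 0 < μ j then (1 - l j) / μ j else l j / (-μ j) with hrdef
    have hfrac : ∀ j ∈ F, 0 < l j ∧ l j < 1 := by
      intro j hj
      have hjA := hFA hj
      obtain ⟨ha, hb'⟩ := hb j hjA
      have hne := (Finset.mem_filter.mp hj).2
      exact ⟨lt_of_le_of_ne ha (Ne.symm hne.1), lt_of_le_of_ne hb' hne.2⟩
    have hrpos : ∀ j ∈ T, 0 < r j := by
      intro j hj
      obtain ⟨hjF, hμj⟩ := Finset.mem_filter.mp hj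
      obtain ⟨ha, hb'⟩ := hfrac j hjF
      by_cases hp : 0 < μ j
      · rw [hrdef]; simp only [hp, if_true]
        exact div_pos (by linarith) hp
      · have hneg : μ j < 0 := lt_of_le_of_ne (not_lt.mp hp) hμj
        rw [hrdef]; simp only [hp, if_false]
        exact div_pos ha (by linarith)
    set t := T.inf' hTne r with htdef
    have htpos : 0 < t := (Finset.lt_inf'_iff _).mpr hrpos
    set l' : Fin m → ℝ := fun j => l j + t * μ j with hl'def
    have hl'off : ∀ j, μ j = 0 → l' j = l j := by
      intro j hj; rw [hl'def]; simp [hj]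
    have hbd' : ∀ j ∈ A, 0 ≤ l' j ∧ l' j ≤ 1 := by
      intro j hjA
      by_cases hμj : μ j = 0
      · rw [hl'off j hμj]; exact hb j hjA
      · have hjF : j ∈ F := by
          by_contra h; exact hμj (hμF j h)
        have hjT : j ∈ T := Finset.mem_filter.mpr ⟨hjF, hμj⟩
        have htr : t ≤ r j := Finset.inf'_le _ hjT
        obtain ⟨ha, hb'⟩ := hfrac j hjF
        by_cases hp : 0 < μ j
        · have hre : r j = (1 - l j) / μ j := by rw [hrdef]; simp [hp]
          rw [hre] at htr
          constructor
          · have : 0 ≤ t * μ j := mul_nonneg htpos.le hp.le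
            rw [hl'def]; dsimp only; linarith
          · have hmul : t * μ j ≤ ((1 - l j) / μ j) * μ j :=
              mul_le_mul_of_nonneg_right htr hp.le
            rw [div_mul_cancel₀ _ (ne_of_gt hp)] at hmul
            rw [hl'def]; dsimp only; linarith
        · have hneg : μ j < 0 := lt_of_le_of_ne (not_lt.mp hp) hμj
          have hre : r j = l j / (-μ j) := by rw [hrdef]; simp [hp]
          rw [hre] at htr
          constructor
          · have hmul : (l j / (-μ j)) * μ j ≤ t * μ j :=
              mul_le_mul_of_nonpos_right htr hneg.le
            have hcalc : (l j / (-μ j)) * μ j = - l j := by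
              rw [div_mul_eq_mul_div, div_neg, mul_div_assoc, div_self hμj, mul_one]
            rw [hcalc] at hmul
            rw [hl'def]; dsimp only; linarith
          · have : t * μ j ≤ 0 := mul_nonpos_of_nonneg_of_nonpos htpos.le hneg.le
            rw [hl'def]; dsimp only; linarith
    have hsum' : ∑ j ∈ A, l' j = ∑ j ∈ A, l j := by
      rw [hl'def]
      rw [Finset.sum_add_distrib, ← Finset.mul_sum, hμsum, mul_zero, add_zero]
    have husum' : ∑ j ∈ A, l' j • u j = ∑ j ∈ A, l j • u j := by
      rw [hl'def]
      simp only [add_smul]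
      rw [Finset.sum_add_distrib]
      have hrw : ∑ j ∈ A, (t * μ j) • u j = t • ∑ j ∈ A, μ j • u j := by
        rw [Finset.smul_sum]
        exact Finset.sum_congr rfl (fun j _ => by rw [smul_smul])
      rw [hrw, hμusum, smul_zero, add_zero]
    obtain ⟨j0, hj0T, hj0eq⟩ := Finset.exists_mem_eq_inf' hTne r
    obtain ⟨hj0F, hμj0⟩ := Finset.mem_filter.mp hj0T
    have htval : t = r j0 := by rw [htdef, hj0eq]
    have hj0int : l' j0 = 0 ∨ l' j0 = 1 := by
      by_cases hp : 0 < μ j0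
      · right
        have hre : r j0 = (1 - l j0) / μ j0 := by rw [hrdef]; simp [hp]
        rw [hl'def]; dsimp only
        rw [htval, hre, div_mul_cancel₀ _ (ne_of_gt hp)]
        ring
      · left
        have hre : r j0 = l j0 / (-μ j0) := by rw [hrdef]; simp [hp]
        rw [hl'def]; dsimp only
        rw [htval, hre, div_mul_eq_mul_div, div_neg, mul_div_assoc, div_self hμj0,
          mul_one]
        ring
    have hsubset : A.filter (fun i => l' i ≠ 0 ∧ l' i ≠ 1) ⊆ F.erase j0 := by
      intro j hj
      obtain ⟨hjA, hj1, hj2⟩ := Finset.mem_filter.mp hj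
      refine Finset.mem_erase.mpr ⟨?_, ?_⟩
      · rintro rfl
        rcases hj0int with h | h
        · exact hj1 h
        · exact hj2 h
      · by_contra hjF
        have hμ0 : μ j = 0 := hμF j hjF
        have hll : l' j = l j := hl'off j hμ0
        have hnotF : ¬ (l j ≠ 0 ∧ l j ≠ 1) := by
          intro hcon
          exact hjF (Finset.mem_filter.mpr ⟨hjA, hcon⟩)
        push_neg at hnotF
        rcases eq_or_ne (l j) 0 with h0 | h0
        · exact hj1 (by rw [hll, h0])
        · exact hj2 (by rw [hll, hnotF h0])
    have hcard' : (A.filter (fun i => l' i ≠ 0 ∧ l' i ≠ 1)).card ≤ n := by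
      have hle2 := Finset.card_le_card hsubset
      rw [Finset.card_erase_of_mem hj0F] at hle2
      omega
    obtain ⟨l'', hb'', hs'', hu'', hcd''⟩ := ih A l' hcard' hbd'
    exact ⟨l'', hb'', by rw [hs'', hsum'], by rw [hu'', husum'], hcd''⟩

/-- Descent step: from a good coefficient vector on `A` with `|A| ≥ d+2`,
produce a good coefficient vector on `A.erase i` for some `i ∈ A`. -/
lemma descent (u : Fin m → Fin d → ℝ) (A : Finset (Fin m)) (hA : d + 2 ≤ A.card)
    (l : Fin m → ℝ) (hb : ∀ i ∈ A, 0 ≤ l i ∧ l i ≤ 1)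
    (hs : ∑ i ∈ A, l i = (A.card : ℝ) - d) (hw : ∑ i ∈ A, l i • u i = 0) :
    ∃ i ∈ A, ∃ l' : Fin m → ℝ, (∀ j ∈ A.erase i, 0 ≤ l' j ∧ l' j ≤ 1) ∧
      ∑ j ∈ A.erase i, l' j = (((A.erase i).card : ℕ) : ℝ) - d ∧
      ∑ j ∈ A.erase i, l' j • u j = 0 := by
  classical
  have hAd : (d : ℝ) + 2 ≤ (A.card : ℝ) := by exact_mod_cast hA
  set c : ℝ := ((A.card : ℝ) - 1 - d) / ((A.card : ℝ) - d) with hcdef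
  have hden : 0 < (A.card : ℝ) - d := by linarith
  have hnum : 0 ≤ (A.card : ℝ) - 1 - d := by linarith
  have hc0 : 0 ≤ c := div_nonneg hnum hden.le
  have hc1 : c ≤ 1 := by rw [hcdef, div_le_one hden]; linarith
  set l₁ : Fin m → ℝ := fun j => c * l j with hl₁def
  have hb₁ : ∀ i ∈ A, 0 ≤ l₁ i ∧ l₁ i ≤ 1 := by
    intro i hi
    obtain ⟨ha, hb'⟩ := hb i hi
    exact ⟨mul_nonneg hc0 ha, le_trans (mul_le_one₀ hc1 ha hb') le_rfl⟩
  have hs₁ : ∑ i ∈ A, l₁ i = (A.card : ℝ) - 1 - d := by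
    rw [hl₁def]
    rw [← Finset.mul_sum, hs, hcdef, div_mul_cancel₀ _ (ne_of_gt hden)]
  have hw₁ : ∑ i ∈ A, l₁ i • u i = 0 := by
    rw [hl₁def]
    have : ∑ i ∈ A, (c * l i) • u i = c • ∑ i ∈ A, l i • u i := by
      rw [Finset.smul_sum]
      exact Finset.sum_congr rfl (fun i _ => by rw [smul_smul])
    rw [this, hw, smul_zero]
  obtain ⟨l₂, hb₂, hs₂, hw₂, hcd₂⟩ := reduceFrac u
    ((A.filter (fun i => l₁ i ≠ 0 ∧ l₁ i ≠ 1)).card) A l₁ le_rfl hb₁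
  rw [hs₁] at hs₂
  rw [hw₁] at hw₂
  have hzero : ∃ i ∈ A, l₂ i = 0 := by
    by_contra hcon
    push_neg at hcon
    set F := A.filter (fun i => l₂ i ≠ 0 ∧ l₂ i ≠ 1) with hFdef
    set G := A.filter (fun i => ¬(l₂ i ≠ 0 ∧ l₂ i ≠ 1)) with hGdef
    have hones : ∀ j ∈ G, l₂ j = 1 := by
      intro j hj
      obtain ⟨hjA, hj2⟩ := Finset.mem_filter.mp hj
      push_neg at hj2
      exact hj2 (hcon j hjA)
    have hsplit : ∑ j ∈ F, l₂ j + ∑ j ∈ G, l₂ j = ∑ j ∈ A, l₂ j :=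
      Finset.sum_filter_add_sum_filter_not A _ _
    have hGsum : ∑ j ∈ G, l₂ j = (G.card : ℝ) := by
      rw [Finset.sum_congr rfl hones, Finset.sum_const, nsmul_eq_mul, mul_one]
    have hcards : F.card + G.card = A.card :=
      Finset.card_filter_add_card_filter_not _
    have hFsum : ∑ j ∈ F, l₂ j = (F.card : ℝ) - 1 - d := by
      have hc' : (F.card : ℝ) + (G.card : ℝ) = (A.card : ℝ) := by exact_mod_cast hcards
      rw [hGsum, hs₂] at hsplit
      linarith
    have hFle : (F.card : ℝ) ≤ (d : ℝ) + 1 := by exact_mod_cast hcd₂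
    rcases Finset.eq_empty_or_nonempty F with hFe | hFne
    · rw [hFe] at hFsum
      simp at hFsum
      have : (0:ℝ) ≤ (d : ℝ) := by positivity
      linarith
    · have hpos : 0 < ∑ j ∈ F, l₂ j := by
        apply Finset.sum_pos
        · intro j hj
          obtain ⟨hjA, hj2⟩ := Finset.mem_filter.mp hj
          exact lt_of_le_of_ne (hb₂ j hjA).1 (Ne.symm hj2.1)
        · exact hFne
      linarith
  obtain ⟨i, hiA, hi0⟩ := hzero
  refine ⟨i, hiA, l₂, fun j hj => hb₂ j (Finset.mem_of_mem_erase hj), ?_, ?_⟩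
  · have he1 : ∑ j ∈ A.erase i, l₂ j = ∑ j ∈ A, l₂ j :=
      Finset.sum_erase _ (by rw [hi0])
    rw [he1, hs₂, Finset.card_erase_of_mem hiA]
    have h1 : 1 ≤ A.card := by omega
    push_cast [Nat.cast_sub h1]
    ring
  · have he2 : ∑ j ∈ A.erase i, l₂ j • u j = ∑ j ∈ A, l₂ j • u j :=
      Finset.sum_erase _ (by rw [hi0, zero_smul])
    rw [he2, hw₂]

/-- A good coefficient vector on `A` bounds the norm of the sum over `A`. -/
lemma good_bnd (hN_add : ∀ x y, N (x + y) ≤ N x + N y)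
    (hN_smul : ∀ (c : ℝ) x, N (c • x) = |c| * N x)
    (u : Fin m → Fin d → ℝ) (hu_norm : ∀ i, N (u i) ≤ M)
    (A : Finset (Fin m)) (l : Fin m → ℝ)
    (hb : ∀ i ∈ A, 0 ≤ l i ∧ l i ≤ 1) (hs : ∑ i ∈ A, l i = (A.card : ℝ) - d)
    (hw : ∑ i ∈ A, l i • u i = 0) : N (∑ i ∈ A, u i) ≤ M * d := by
  have key : ∑ i ∈ A, u i = ∑ i ∈ A, (1 - l i) • u i := by
    have : ∑ i ∈ A, u i = ∑ i ∈ A, ((1 - l i) • u i + l i • u i) := by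
      refine Finset.sum_congr rfl (fun i _ => ?_)
      rw [← add_smul]
      simp
    rw [this, Finset.sum_add_distrib, hw, add_zero]
  rw [key]
  have h1 : N (∑ i ∈ A, (1 - l i) • u i) ≤ ∑ i ∈ A, (1 - l i) * N (u i) := by
    refine le_trans (auxN_sum_le hN_add hN_smul A _) ?_
    refine Finset.sum_le_sum (fun i hi => ?_)
    rw [hN_smul, abs_of_nonneg (by linarith [(hb i hi).2])]
  have h2 : ∑ i ∈ A, (1 - l i) * N (u i) ≤ ∑ i ∈ A, (1 - l i) * M := by
    refine Finset.sum_le_sum (fun i hi => ?_)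
    exact mul_le_mul_of_nonneg_left (hu_norm i) (by linarith [(hb i hi).2])
  have h3 : ∑ i ∈ A, (1 - l i) * M = (d : ℝ) * M := by
    rw [← Finset.sum_mul]
    congr 1
    rw [Finset.sum_sub_distrib, hs, Finset.sum_const, nsmul_eq_mul, mul_one]
    ring
  rw [h3] at h2
  calc N (∑ i ∈ A, (1 - l i) • u i) ≤ (d : ℝ) * M := le_trans h1 h2
    _ = M * d := mul_comm _ _

lemma small_bnd (hN_add : ∀ x y, N (x + y) ≤ N x + N y)
    (hN_smul : ∀ (c : ℝ) x, N (c • x) = |c| * N x)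
    (u : Fin m → Fin d → ℝ) (hu_norm : ∀ i, N (u i) ≤ M) (hM : 0 ≤ M)
    (A : Finset (Fin m)) (hA : A.card ≤ d) : N (∑ i ∈ A, u i) ≤ M * d := by
  refine le_trans (auxN_sum_le hN_add hN_smul A _) ?_
  calc ∑ i ∈ A, N (u i) ≤ ∑ _i ∈ A, M := Finset.sum_le_sum (fun i _ => hu_norm i)
    _ = (A.card : ℝ) * M := by rw [Finset.sum_const, nsmul_eq_mul]
    _ ≤ (d : ℝ) * M := mul_le_mul_of_nonneg_right (by exact_mod_cast hA) hM
    _ = M * d := mul_comm _ _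

/-- The chain construction: nested sets all of whose sums are bounded. -/
lemma chainLem (hN_add : ∀ x y, N (x + y) ≤ N x + N y)
    (hN_smul : ∀ (c : ℝ) x, N (c • x) = |c| * N x)
    (u : Fin m → Fin d → ℝ) (hu_norm : ∀ i, N (u i) ≤ M) (hM : 0 ≤ M) :
    ∀ (n : ℕ) (A : Finset (Fin m)), A.card = n →
      (A.card ≤ d ∨ ∃ l : Fin m → ℝ, (∀ i ∈ A, 0 ≤ l i ∧ l i ≤ 1) ∧
        ∑ i ∈ A, l i = (A.card : ℝ) - d ∧ ∑ i ∈ A, l i • u i = 0) →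
      ∃ C : ℕ → Finset (Fin m), C A.card = A ∧ ∀ k ≤ A.card, (C k).card = k ∧
        N (∑ i ∈ C k, u i) ≤ M * d ∧ (k < A.card → C k ⊆ C (k + 1)) := by
  intro n
  induction n with
  | zero =>
    intro A hcard _
    have hAe : A = ∅ := Finset.card_eq_zero.mp hcard
    refine ⟨fun _ => ∅, by rw [hcard, hAe], ?_⟩
    intro k hk
    have hk0 : k = 0 := by omega
    subst hk0
    refine ⟨Finset.card_empty, ?_, fun h => by omega⟩
    rw [Finset.sum_empty, auxN0 hN_smul]
    positivity
  | succ n ih =>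
    intro A hcard hgood
    have hAbnd : N (∑ i ∈ A, u i) ≤ M * d := by
      rcases hgood with h | ⟨l, hb, hs, hw⟩
      · exact small_bnd hN_add hN_smul u hu_norm hM A h
      · exact good_bnd hN_add hN_smul u hu_norm A l hb hs hw
    have hstep : ∃ i ∈ A, ((A.erase i).card ≤ d ∨ ∃ l : Fin m → ℝ,
        (∀ j ∈ A.erase i, 0 ≤ l j ∧ l j ≤ 1) ∧
        ∑ j ∈ A.erase i, l j = (((A.erase i).card : ℕ) : ℝ) - d ∧
        ∑ j ∈ A.erase i, l j • u j = 0) := by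
      by_cases hsz : A.card ≤ d + 1
      · have hne : A.Nonempty := Finset.card_pos.mp (by omega)
        obtain ⟨i, hi⟩ := hne
        refine ⟨i, hi, Or.inl ?_⟩
        rw [Finset.card_erase_of_mem hi]; omega
      · push_neg at hsz
        rcases hgood with h | ⟨l, hb, hs, hw⟩
        · omega
        · obtain ⟨i, hiA, l', hh1, hh2, hh3⟩ := descent u A (by omega) l hb hs hw
          exact ⟨i, hiA, Or.inr ⟨l', hh1, hh2, hh3⟩⟩
    obtain ⟨i, hiA, hgood'⟩ := hstep
    have hcard' : (A.erase i).card = n := by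
      rw [Finset.card_erase_of_mem hiA]; omega
    obtain ⟨C', hC'top, hC'⟩ := ih (A.erase i) hcard' hgood'
    rw [hcard'] at hC'top hC'
    refine ⟨fun k => if k = A.card then A else C' k, by simp, ?_⟩
    intro k hk
    by_cases hkeq : k = A.card
    · subst hkeq
      refine ⟨by simp, by simpa using hAbnd, fun h => absurd h (lt_irrefl _)⟩
    · have hkn : k ≤ n := by omega
      have h := hC' k hkn
      simp only [if_neg hkeq]
      refine ⟨h.1, h.2.1, fun _ => ?_⟩
      by_cases hk1 : k + 1 = A.card
      · rw [if_pos hk1]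
        have hkn' : k = n := by omega
        subst hkn'
        rw [hC'top]
        exact Finset.erase_subset _ _
      · rw [if_neg hk1]
        exact h.2.2 (by omega)

end SteinitzAux

theorem stmt13 (d m : ℕ) (M : ℝ) (N : (Fin d → ℝ) → ℝ)
    (hN_add : ∀ x y, N (x + y) ≤ N x + N y)
    (hN_smul : ∀ (c : ℝ) x, N (c • x) = |c| * N x)
    (u : Fin m → Fin d → ℝ)
    (hu_norm : ∀ i, N (u i) ≤ M) (hzero : ∑ i, u i = 0) :
    ∃ π : Equiv.Perm (Fin m), ∀ k : ℕ, 1 ≤ k → k ≤ m →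
      N (∑ i ∈ Finset.univ.filter (fun i : Fin m => (i:ℕ) < k), u (π i))
        ≤ M * d := by
  classical
  rcases Nat.eq_zero_or_pos m with hm0 | hm
  · subst hm0
    exact ⟨1, fun k hk1 hkm => by omega⟩
  have hM : 0 ≤ M :=
    le_trans (auxN_nonneg hN_add hN_smul (u ⟨0, hm⟩)) (hu_norm _)
  have hcardu : (Finset.univ : Finset (Fin m)).card = m := by simp
  have hgood : (Finset.univ : Finset (Fin m)).card ≤ d ∨
      ∃ l : Fin m → ℝ, (∀ i ∈ (Finset.univ : Finset (Fin m)), 0 ≤ l i ∧ l i ≤ 1) ∧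
        ∑ i ∈ (Finset.univ : Finset (Fin m)), l i
          = (((Finset.univ : Finset (Fin m)).card : ℕ) : ℝ) - d ∧
        ∑ i ∈ (Finset.univ : Finset (Fin m)), l i • u i = 0 := by
    rcases le_or_gt m d with h | h
    · left; rw [hcardu]; exact h
    · right
      have hm' : (0 : ℝ) < (m : ℝ) := by exact_mod_cast hm
      have hdm : (d : ℝ) < (m : ℝ) := by exact_mod_cast h
      refine ⟨fun _ => ((m : ℝ) - d) / m, ?_, ?_, ?_⟩
      · intro i _
        constructor
        · exact div_nonneg (by linarith) hm'.le
        · rw [div_le_one hm']; linarith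
      · rw [Finset.sum_const, hcardu, nsmul_eq_mul]
        field_simp
      · rw [← Finset.smul_sum, hzero, smul_zero]
  obtain ⟨C, hCtop, hC⟩ := chainLem hN_add hN_smul u hu_norm hM
    (Finset.univ : Finset (Fin m)).card (Finset.univ : Finset (Fin m)) rfl hgood
  rw [hcardu] at hCtop hC
  have hmono : ∀ a b, a ≤ b → b ≤ m → C a ⊆ C b := by
    intro a b hab
    induction b, hab using Nat.le_induction with
    | base => intro _; exact subset_rfl
    | succ b hb ihb =>
      intro hbm
      exact subset_trans (ihb (by omega)) ((hC b (by omega)).2.2 (by omega))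
  have hex : ∀ i : Fin m, ∃ x, x ∈ C (i.1 + 1) ∧ x ∉ C i.1 := by
    intro i
    have h1 := (hC i.1 (by omega)).1
    have h2 := (hC (i.1 + 1) (by omega)).1
    by_contra hcon
    push_neg at hcon
    have hsub : C (i.1 + 1) ⊆ C i.1 := fun x hx => hcon x hx
    have := Finset.card_le_card hsub
    omega
  set f : Fin m → Fin m := fun i => (hex i).choose with hfdef
  have hf1 : ∀ i, f i ∈ C (i.1 + 1) := fun i => (hex i).choose_spec.1
  have hf2 : ∀ i, f i ∉ C i.1 := fun i => (hex i).choose_spec.2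
  have hinj : Function.Injective f := by
    intro a b hab
    rcases lt_trichotomy a.1 b.1 with h | h | h
    · exfalso
      have : f a ∈ C b.1 := hmono (a.1 + 1) b.1 h (by omega) (hf1 a)
      rw [hab] at this
      exact hf2 b this
    · exact Fin.ext h
    · exfalso
      have : f b ∈ C a.1 := hmono (b.1 + 1) a.1 h (by omega) (hf1 b)
      rw [← hab] at this
      exact hf2 a this
  have hbij : Function.Bijective f := Finite.injective_iff_bijective.mp hinj
  refine ⟨Equiv.ofBijective f hbij, ?_⟩
  have himg : ∀ k, k ≤ m →
      (Finset.univ.filter (fun i : Fin m => (i : ℕ) < k)).image f = C k := by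
    intro k
    induction k with
    | zero =>
      intro _
      have h0 : C 0 = ∅ := Finset.card_eq_zero.mp (hC 0 (by omega)).1
      rw [h0]
      have : (Finset.univ.filter (fun i : Fin m => (i : ℕ) < 0)) = ∅ := by
        ext j; simp
      rw [this, Finset.image_empty]
    | succ k ihk =>
      intro hk1
      have hkm : k < m := by omega
      have hfilter : Finset.univ.filter (fun i : Fin m => (i : ℕ) < k + 1)
          = insert ⟨k, hkm⟩ (Finset.univ.filter (fun i : Fin m => (i : ℕ) < k)) := by
        ext j
        simp only [Finset.mem_filter, Finset.mem_univ, true_and, Finset.mem_insert]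
        rw [Fin.ext_iff]
        simp only [Nat.lt_succ_iff_lt_or_eq]
        tauto
      rw [hfilter, Finset.image_insert, ihk (by omega)]
      have hfk1 : f ⟨k, hkm⟩ ∈ C (k + 1) := hf1 ⟨k, hkm⟩
      have hfk2 : f ⟨k, hkm⟩ ∉ C k := hf2 ⟨k, hkm⟩
      have hsub : insert (f ⟨k, hkm⟩) (C k) ⊆ C (k + 1) :=
        Finset.insert_subset hfk1 (hmono k (k + 1) (by omega) hk1)
      apply Finset.eq_of_subset_of_card_le hsub
      rw [Finset.card_insert_of_notMem hfk2, (hC k (by omega)).1,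
        (hC (k + 1) (by omega)).1]
  intro k hk1 hkm
  have hsum : ∑ i ∈ Finset.univ.filter (fun i : Fin m => (i : ℕ) < k),
      u ((Equiv.ofBijective f hbij) i) = ∑ x ∈ C k, u x := by
    rw [← himg k hkm]
    rw [Finset.sum_image (fun a _ b _ h => hinj h)]
    rfl
  rw [hsum]
  exact (hC k (by omega)).2.1
end
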